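/- Mirror step computation: for x ∈ ℝⁿ and p = ∇ψ(x) - γ∇f(x) with ψ(x) = ‖x‖⁴/4 + ‖x‖²/2, the solution of ∇ψ(x⁺) = p is x⁺ = t* p, where t* is the unique positive real root of t³‖p‖² + t - 1 = 0 (when p ≠ 0). -/

import Mathlib

noncomputable def psiEnt {n : ℕ} (x : EuclideanSpace ℝ (Fin n)) : ℝ :=
  ‖x‖ ^ 4 / 4 + ‖x‖ ^ 2 / 2

lemma hasGradientAt_psiEnt {n : ℕ} (x : EuclideanSpace ℝ (Fin n)) :
    HasGradientAt (psiEnt (n := n)) ((‖x‖ ^ 2 + 1) • x) x := by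
  rw [hasGradientAt_iff_hasFDerivAt]
  have hq : HasFDerivAt (fun y : EuclideanSpace ℝ (Fin n) => ‖y‖ ^ 2)
      (2 • (innerSL ℝ x).comp (ContinuousLinearMap.id ℝ _)) x := by
    simpa using (hasFDerivAt_id x).norm_sq
  have hh : HasDerivAt (fun u : ℝ => u ^ 2 / 4 + u / 2) (‖x‖ ^ 2 / 2 + 1 / 2) (‖x‖ ^ 2) := by
    have := ((hasDerivAt_pow 2 (‖x‖ ^ 2)).div_const 4).add ((hasDerivAt_id (‖x‖ ^ 2)).div_const 2)
    exact this.congr_deriv (by norm_num; ring)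
  have h := hh.comp_hasFDerivAt x hq
  have hfun : psiEnt (n := n) = (fun u : ℝ => u ^ 2 / 4 + u / 2) ∘ (fun y => ‖y‖ ^ 2) := by
    funext y
    simp [psiEnt, Function.comp]
    ring
  rw [hfun]
  refine h.congr_fderiv ?_
  ext v
  simp [InnerProductSpace.toDual, real_inner_smul_left]
  ring

/-- Mirror step computation: for `p ≠ 0`, the equation `∇ψ(x⁺) = p` with
`ψ(x) = ‖x‖⁴/4 + ‖x‖²/2` is solved exactly by `x⁺ = t⋆ p`, where `t⋆` is the
unique positive real root of `t³‖p‖² + t - 1 = 0`. -/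
theorem mirror_step_computation {n : ℕ} (p : EuclideanSpace ℝ (Fin n))
    (hp : p ≠ 0) :
    ∃ t : ℝ, 0 < t ∧ t ^ 3 * ‖p‖ ^ 2 + t - 1 = 0 ∧
      (∀ s : ℝ, 0 < s → s ^ 3 * ‖p‖ ^ 2 + s - 1 = 0 → s = t) ∧
      (∀ xplus : EuclideanSpace ℝ (Fin n),
        gradient (psiEnt (n := n)) xplus = p ↔ xplus = t • p) := by
  set c := ‖p‖ ^ 2 with hc
  have hc0 : 0 < c := by rw [hc]; exact pow_pos (norm_pos_iff.mpr hp) 2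
  set g : ℝ → ℝ := fun t => t ^ 3 * c + t - 1 with hg
  have hmono : StrictMono g := by
    intro a b hab
    have hcube : a ^ 3 < b ^ 3 := Odd.strictMono_pow (R := ℝ) ⟨1, by norm_num⟩ hab
    simp only [hg]
    nlinarith
  -- existence via IVT
  have hcont : ContinuousOn g (Set.Icc 0 1) := by fun_prop
  have hiv := intermediate_value_Icc (by norm_num : (0:ℝ) ≤ 1) hcont
  have h0 : (0:ℝ) ∈ Set.Icc (g 0) (g 1) :=
    ⟨by norm_num [hg], by norm_num [hg]; linarith [hc0]⟩
  obtain ⟨t, htmem, htroot⟩ := hiv h0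
  have htroot' : t ^ 3 * c + t - 1 = 0 := htroot
  have htpos : 0 < t := by
    rcases lt_or_eq_of_le htmem.1 with h | h
    · exact h
    · exfalso; have h2 := htroot'; rw [← h] at h2; norm_num at h2
  have huniq : ∀ s : ℝ, 0 < s → s ^ 3 * c + s - 1 = 0 → s = t := by
    intro s hs hsroot
    exact hmono.injective (show s ^ 3 * c + s - 1 = t ^ 3 * c + t - 1 by rw [hsroot, htroot'])
  refine ⟨t, htpos, htroot, huniq, ?_⟩
  intro x
  have hgrad : gradient (psiEnt (n := n)) x = (‖x‖ ^ 2 + 1) • x :=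
    (hasGradientAt_psiEnt x).gradient
  rw [hgrad]
  constructor
  · intro hx
    -- x = (1/(‖x‖²+1)) • p
    have hb : (0:ℝ) < ‖x‖ ^ 2 + 1 := by positivity
    set s := (‖x‖ ^ 2 + 1)⁻¹ with hs
    have hspos : 0 < s := by positivity
    have hxp : x = s • p := by
      rw [← hx, smul_smul, hs, inv_mul_cancel₀ (ne_of_gt hb), one_smul]
    have hnx : ‖x‖ = s * ‖p‖ := by
      rw [hxp, norm_smul, Real.norm_eq_abs, abs_of_pos hspos]
    have hsroot : s ^ 3 * c + s - 1 = 0 := by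
      have h1 : s * (‖x‖ ^ 2 + 1) = 1 := by
        rw [hs]; field_simp
      rw [hnx] at h1
      rw [hc]
      nlinarith
    rw [huniq s hspos hsroot] at hxp
    exact hxp
  · intro hx
    rw [hx, norm_smul, smul_smul, Real.norm_eq_abs]
    have : (|t| * ‖p‖) ^ 2 + 1 = t ^ 2 * c + 1 := by
      rw [hc, mul_pow, sq_abs]
    rw [this]
    have ht1 : (t ^ 2 * c + 1) * t = 1 := by nlinarith [htroot']
    rw [ht1, one_smul]
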